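/- For L⁻_α = −d²/dx² + 2α cos(2πx/a) on L²((0, a/2)) with boundary conditions u(0) = u'(a/2) = 0 and −6π²/a² < α < 0, the first eigenvalue satisfies μ⁻₁(α) ≥ (π/a)². -/

import Mathlib

set_option maxHeartbeats 1000000

open Real

/-- Rayleigh quadratic form of `-d²/dx² + W` on `(c,d)`. -/
noncomputable def rayQF (W : ℝ → ℝ) (c d : ℝ) (u : ℝ → ℝ) : ℝ :=
  ∫ x in c..d, ((deriv u x) ^ 2 + W x * (u x) ^ 2)

/-- Form domain with antiperiodic boundary conditions on `(c,d)`. -/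
def domAP (c d : ℝ) : Set (ℝ → ℝ) :=
  {u | ContDiff ℝ 1 u ∧ u d = -u c ∧ deriv u d = -deriv u c}

/-- The `j`-th Courant–Fischer min-max value of `-d²/dx² + W` on `(c,d)`
with form domain `D`. -/
noncomputable def minmaxEV (W : ℝ → ℝ) (c d : ℝ) (D : Set (ℝ → ℝ)) (j : ℕ) : ℝ :=
  ⨆ v : Fin (j - 1) → (ℝ → ℝ),
    ⨅ u : {u : ℝ → ℝ // u ∈ D ∧ (∫ x in c..d, (u x) ^ 2) = 1 ∧
        ∀ i, (∫ x in c..d, u x * v i x) = 0},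
      rayQF W c d u.1

/- ===== auxiliary development ===== -/

lemma polyG (t : ℝ) :
    0 ≤ 255 + 360*t - 471*t^2 - 2856*t^3 + 3672*t^4 - 864*t^5 + 144*t^6 := by
  nlinarith [sq_nonneg (60*t^3 - 180*t^2 - 19*t + 72), sq_nonneg (993*t^2 - 700*t - 134),
    sq_nonneg (500*t - 387), sq_nonneg (t^2 - t), sq_nonneg (t+1), sq_nonneg (t-1),
    sq_nonneg (t^3 - t), sq_nonneg (t^3+t^2)]

/-- The Riccati supersolution `g`. -/
noncomputable def gA (p s x : ℝ) : ℝ :=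
  p * Real.cos (p*x) / Real.sin (p*x)
    - s * p * (27/10 * Real.sin (2*p*x) - 9/20 * Real.sin (4*p*x) + 3/40 * Real.sin (6*p*x))

/-- Derivative of `gA`. -/
noncomputable def gAd (p s x : ℝ) : ℝ :=
  -(p^2 / Real.sin (p*x)^2)
    - s * p^2 * (27/5 * Real.cos (2*p*x) - 9/5 * Real.cos (4*p*x) + 9/20 * Real.cos (6*p*x))

lemma gA_hasDeriv (p s : ℝ) {x : ℝ} (hS : Real.sin (p*x) ≠ 0) :
    HasDerivAt (gA p s) (gAd p s x) x := by
  have h1 : HasDerivAt (fun y : ℝ => p*y) p x := by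
    simpa using (hasDerivAt_id x).const_mul p
  have h2 : HasDerivAt (fun y : ℝ => 2*p*y) (2*p) x := by
    simpa using (hasDerivAt_id x).const_mul (2*p)
  have h4 : HasDerivAt (fun y : ℝ => 4*p*y) (4*p) x := by
    simpa using (hasDerivAt_id x).const_mul (4*p)
  have h6 : HasDerivAt (fun y : ℝ => 6*p*y) (6*p) x := by
    simpa using (hasDerivAt_id x).const_mul (6*p)
  have hsin : HasDerivAt (fun y => Real.sin (p*y)) (Real.cos (p*x) * p) x :=
    (Real.hasDerivAt_sin (p*x)).comp x h1
  have hcos : HasDerivAt (fun y => Real.cos (p*y)) (-Real.sin (p*x) * p) x :=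
    (Real.hasDerivAt_cos (p*x)).comp x h1
  have hsin2 : HasDerivAt (fun y => Real.sin (2*p*y)) (Real.cos (2*p*x) * (2*p)) x :=
    (Real.hasDerivAt_sin (2*p*x)).comp x h2
  have hsin4 : HasDerivAt (fun y => Real.sin (4*p*y)) (Real.cos (4*p*x) * (4*p)) x :=
    (Real.hasDerivAt_sin (4*p*x)).comp x h4
  have hsin6 : HasDerivAt (fun y => Real.sin (6*p*y)) (Real.cos (6*p*x) * (6*p)) x :=
    (Real.hasDerivAt_sin (6*p*x)).comp x h6
  have hnum : HasDerivAt (fun y => p * Real.cos (p*y)) (p * (-Real.sin (p*x) * p)) x :=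
    hcos.const_mul p
  have hfrac := hnum.div hsin hS
  have hrest := (((hsin2.const_mul ((27:ℝ)/10)).sub (hsin4.const_mul ((9:ℝ)/20))).add
      (hsin6.const_mul ((3:ℝ)/40))).const_mul (s*p)
  have H := hfrac.sub hrest
  have hval : gAd p s x =
      (p * (-Real.sin (p*x) * p) * Real.sin (p*x) - p * Real.cos (p*x) * (Real.cos (p*x) * p)) /
          Real.sin (p*x) ^ 2 -
        s * p * (27/10 * (Real.cos (2*p*x) * (2*p)) - 9/20 * (Real.cos (4*p*x) * (4*p)) +
          3/40 * (Real.cos (6*p*x) * (6*p))) := by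
    have hP := Real.sin_sq_add_cos_sq (p*x)
    have hnum_eq : p * (-Real.sin (p*x) * p) * Real.sin (p*x)
        - p * Real.cos (p*x) * (Real.cos (p*x) * p) = -p^2 := by
      linear_combination (-(p^2)) * hP
    rw [hnum_eq]
    simp only [gAd]
    ring
  rw [hval]
  exact H

lemma riccati (p s x : ℝ) (hs0 : 0 ≤ s) (hs1 : s ≤ 1) (hS : Real.sin (p*x) ≠ 0) :
    gAd p s x + (gA p s x)^2 ≤ -p^2 - 12*s*p^2*Real.cos (2*p*x) := by
  have hSC : Real.sin (p*x)^2 + Real.cos (p*x)^2 = 1 := Real.sin_sq_add_cos_sq (p*x)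
  set S := Real.sin (p*x) with hSdef
  set C := Real.cos (p*x) with hCdef
  have hs2 : Real.sin (2*p*x) = 2*S*C := by
    rw [show 2*p*x = 2*(p*x) by ring, Real.sin_two_mul]
  have hc2 : Real.cos (2*p*x) = 2*C^2-1 := by
    rw [show 2*p*x = 2*(p*x) by ring, Real.cos_two_mul]
  have hs4 : Real.sin (4*p*x) = 2*(2*S*C)*(2*C^2-1) := by
    rw [show 4*p*x = 2*(2*p*x) by ring, Real.sin_two_mul, hs2, hc2]
  have hc4 : Real.cos (4*p*x) = 2*(2*C^2-1)^2-1 := by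
    rw [show 4*p*x = 2*(2*p*x) by ring, Real.cos_two_mul, hc2]
  have hs6 : Real.sin (6*p*x) = 2*S*C*(2*(2*C^2-1)^2-1) + (2*C^2-1)*(2*(2*S*C)*(2*C^2-1)) := by
    rw [show 6*p*x = 2*p*x + 4*p*x by ring, Real.sin_add, hs2, hc2, hs4, hc4]
  have hc6 : Real.cos (6*p*x) = (2*C^2-1)*(2*(2*C^2-1)^2-1) - 2*S*C*(2*(2*S*C)*(2*C^2-1)) := by
    rw [show 6*p*x = 2*p*x + 4*p*x by ring, Real.cos_add, hs2, hc2, hs4, hc4]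
  have hgA : gA p s x * S = p*C - s*p*(27/10*(2*S*C) - 9/20*(2*(2*S*C)*(2*C^2-1))
      + 3/40*(2*S*C*(2*(2*C^2-1)^2-1) + (2*C^2-1)*(2*(2*S*C)*(2*C^2-1))))*S := by
    simp only [gA]
    rw [← hSdef, ← hCdef]
    rw [hs2, hs4, hs6]
    field_simp
  have hgAd : gAd p s x * S^2 = (-p^2 - s*p^2*(27/5*(2*C^2-1) - 9/5*(2*(2*C^2-1)^2-1)
      + 9/20*((2*C^2-1)*(2*(2*C^2-1)^2-1) - 2*S*C*(2*(2*S*C)*(2*C^2-1))))*S^2) := by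
    simp only [gAd]
    rw [← hSdef]
    rw [hc2, hc4, hc6]
    field_simp
  have key : ((-p^2 - 12*s*p^2*(2*C^2-1)) - (gAd p s x + (gA p s x)^2)) * S^2
      = 1/1600*(s*p^2)*(255 + 360*(2*C^2-1) - 471*(2*C^2-1)^2 - 2856*(2*C^2-1)^3
          + 3672*(2*C^2-1)^4 - 864*(2*C^2-1)^5 + 144*(2*C^2-1)^6)*S^2
        + s*(1-s)*p^2*(27/10*(2*S*C) - 9/20*(2*(2*S*C)*(2*C^2-1))
          + 3/40*(2*S*C*(2*(2*C^2-1)^2-1) + (2*C^2-1)*(2*(2*S*C)*(2*C^2-1))))^2*S^2 := by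
    linear_combination (norm := ring)
      (-(p^2) - 21969/400*S^2*C^2*p^2*s + 423/5*S^2*C^4*p^2*s - 1818/25*S^2*C^6*p^2*s
        + 144/5*S^2*C^8*p^2*s - 144/25*S^2*C^10*p^2*s) * hSC
      - hgAd
      - (gA p s x * S + (p*C - s*p*(27/10*(2*S*C) - 9/20*(2*(2*S*C)*(2*C^2-1))
          + 3/40*(2*S*C*(2*(2*C^2-1)^2-1) + (2*C^2-1)*(2*(2*S*C)*(2*C^2-1))))*S)) * hgA
  have hGnn := polyG (2*C^2-1)
  have hcert : 0 ≤ 1/1600*(s*p^2)*(255 + 360*(2*C^2-1) - 471*(2*C^2-1)^2 - 2856*(2*C^2-1)^3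
          + 3672*(2*C^2-1)^4 - 864*(2*C^2-1)^5 + 144*(2*C^2-1)^6)*S^2
        + s*(1-s)*p^2*(27/10*(2*S*C) - 9/20*(2*(2*S*C)*(2*C^2-1))
          + 3/40*(2*S*C*(2*(2*C^2-1)^2-1) + (2*C^2-1)*(2*(2*S*C)*(2*C^2-1))))^2*S^2 := by
    have h1 : (0:ℝ) ≤ s*(1-s) := mul_nonneg hs0 (by linarith)
    have h2 : (0:ℝ) ≤ 1/1600*(s*p^2) := by positivity
    have h3 := mul_nonneg (mul_nonneg h2 hGnn) (sq_nonneg S)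
    have h4 := mul_nonneg (mul_nonneg (mul_nonneg h1 (sq_nonneg p))
      (sq_nonneg (27/10*(2*S*C) - 9/20*(2*(2*S*C)*(2*C^2-1))
          + 3/40*(2*S*C*(2*(2*C^2-1)^2-1) + (2*C^2-1)*(2*(2*S*C)*(2*C^2-1)))))) (sq_nonneg S)
    nlinarith [h3, h4]
  have hS2 : (0:ℝ) < S^2 := by positivity
  rw [hc2]
  by_contra hcon
  push_neg at hcon
  have hneg : ((-p^2 - 12*s*p^2*(2*C^2-1)) - (gAd p s x + (gA p s x)^2)) * S^2 < 0 :=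
    mul_neg_of_neg_of_pos (by linarith) hS2
  linarith [key ▸ hneg, hcert]

theorem mathieu_minus_first_ev_lower (a α : ℝ) (ha : 0 < a)
    (hα₁ : -(6 * π ^ 2 / a ^ 2) < α) (hα₂ : α < 0) :
    (π / a) ^ 2 ≤
      minmaxEV (fun x => 2 * α * Real.cos (2 * π * x / a)) 0 (a / 2)
        {u : ℝ → ℝ | ContDiff ℝ 1 u ∧ u 0 = 0 ∧ deriv u (a / 2) = 0} 1 := by
  have hπ : 0 < π := Real.pi_pos
  set p : ℝ := π / a with hp
  have hp0 : 0 < p := div_pos hπ ha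
  have ha2 : 0 < a/2 := by linarith
  have hpa2 : p * (a/2) = π/2 := by rw [hp]; field_simp
  have hp2 : p^2 = π^2 / a^2 := by rw [hp, div_pow]
  set β : ℝ := -α with hβ
  have hβ0 : 0 < β := by rw [hβ]; linarith
  have h6p2 : 6 * p^2 = 6 * π^2 / a^2 := by rw [hp2]; ring
  have hβ6 : β < 6 * p^2 := by rw [hβ]; linarith [hα₁, h6p2]
  set s : ℝ := β / (6 * p^2) with hs
  have hs0 : 0 < s := div_pos hβ0 (by positivity)
  have hs1 : s ≤ 1 := by
    rw [hs, div_le_one (by positivity)]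
    linarith
  have harg : ∀ x : ℝ, 2 * π * x / a = 2*p*x := by
    intro x; rw [hp]; ring
  -- the normalized test function
  set u₀ : ℝ → ℝ := fun x => 2/Real.sqrt a * Real.sin (p*x) with hu₀
  have hu₀cd : ContDiff ℝ 1 u₀ := by
    apply ContDiff.mul contDiff_const
    exact (Real.contDiff_sin.of_le le_top).comp (contDiff_const.mul contDiff_id)
  have hu₀0 : u₀ 0 = 0 := by simp [hu₀]
  have hu₀d : deriv u₀ (a/2) = 0 := by
    have h1 : HasDerivAt (fun y : ℝ => p*y) p (a/2) := by
      simpa using (hasDerivAt_id (a/2)).const_mul p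
    have hd : HasDerivAt u₀ (2/Real.sqrt a * (Real.cos (p*(a/2)) * p)) (a/2) :=
      (((Real.hasDerivAt_sin (p*(a/2))).comp _ h1)).const_mul (2/Real.sqrt a)
    rw [hd.deriv, hpa2, Real.cos_pi_div_two]
    ring
  have hFTC0 : ∀ x : ℝ, HasDerivAt (fun y => y/2 - Real.sin (2*p*y)/(4*p))
      (Real.sin (p*x)^2) x := by
    intro x
    have h2 : HasDerivAt (fun y : ℝ => 2*p*y) (2*p) x := by
      simpa using (hasDerivAt_id x).const_mul (2*p)
    have hs2 : HasDerivAt (fun y => Real.sin (2*p*y)) (Real.cos (2*p*x) * (2*p)) x :=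
      (Real.hasDerivAt_sin (2*p*x)).comp x h2
    have H := ((hasDerivAt_id x).div_const 2).sub (hs2.div_const (4*p))
    have hval : Real.sin (p*x)^2 = 1/2 - Real.cos (2*p*x) * (2*p) / (4*p) := by
      have hc2 : Real.cos (2*p*x) = 2*Real.cos (p*x)^2 - 1 := by
        rw [show 2*p*x = 2*(p*x) by ring, Real.cos_two_mul]
      have hP := Real.sin_sq_add_cos_sq (p*x)
      rw [hc2]
      field_simp
      linear_combination 8 * hP
    rw [hval]
    exact H
  have hsin2int : (∫ x in (0:ℝ)..(a/2), Real.sin (p*x)^2) = a/4 := by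
    have hcont : IntervalIntegrable (fun x => Real.sin (p*x)^2) MeasureTheory.volume 0 (a/2) := by
      apply Continuous.intervalIntegrable
      exact (Real.continuous_sin.comp (continuous_const.mul continuous_id)).pow 2
    rw [intervalIntegral.integral_eq_sub_of_hasDerivAt (fun x _ => hFTC0 x) hcont]
    have h2pa : 2*p*(a/2) = π := by rw [hp]; field_simp; all_goals ring
    simp only [h2pa, mul_zero, Real.sin_pi, Real.sin_zero]
    ring
  have hu₀norm : (∫ x in (0:ℝ)..(a/2), (u₀ x)^2) = 1 := by
    have hsq : ∀ x, (u₀ x)^2 = (4/a) * Real.sin (p*x)^2 := by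
      intro x
      rw [hu₀]
      have : (2/Real.sqrt a)^2 = 4/a := by
        rw [div_pow, Real.sq_sqrt ha.le]; norm_num
      calc (2/Real.sqrt a * Real.sin (p*x))^2
          = (2/Real.sqrt a)^2 * Real.sin (p*x)^2 := by ring
        _ = 4/a * Real.sin (p*x)^2 := by rw [this]
    calc (∫ x in (0:ℝ)..(a/2), (u₀ x)^2)
        = ∫ x in (0:ℝ)..(a/2), (4/a) * Real.sin (p*x)^2 := by
          apply intervalIntegral.integral_congr
          exact fun x _ => hsq x
      _ = (4/a) * ∫ x in (0:ℝ)..(a/2), Real.sin (p*x)^2 := by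
          rw [intervalIntegral.integral_const_mul]
      _ = 1 := by rw [hsin2int]; field_simp
  -- reduce to a lower bound for each test function
  haveI hEmp : IsEmpty (Fin (1-1)) := by
    show IsEmpty (Fin 0); infer_instance
  haveI hU : Unique (Fin (1-1) → (ℝ → ℝ)) := Pi.uniqueOfIsEmpty _
  have main : ∀ v : Fin (1-1) → (ℝ → ℝ),
      (π/a)^2 ≤ ⨅ u : {u : ℝ → ℝ //
        u ∈ {u : ℝ → ℝ | ContDiff ℝ 1 u ∧ u 0 = 0 ∧ deriv u (a / 2) = 0} ∧
        (∫ x in (0:ℝ)..(a/2), (u x)^2) = 1 ∧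
        ∀ i, (∫ x in (0:ℝ)..(a/2), u x * v i x) = 0},
        rayQF (fun x => 2 * α * Real.cos (2 * π * x / a)) 0 (a/2) u.1 := by
    intro v
    haveI : Nonempty {u : ℝ → ℝ //
        u ∈ {u : ℝ → ℝ | ContDiff ℝ 1 u ∧ u 0 = 0 ∧ deriv u (a / 2) = 0} ∧
        (∫ x in (0:ℝ)..(a/2), (u x)^2) = 1 ∧
        ∀ i, (∫ x in (0:ℝ)..(a/2), u x * v i x) = 0} :=
      ⟨⟨u₀, ⟨hu₀cd, hu₀0, hu₀d⟩, hu₀norm, fun i => isEmptyElim i⟩⟩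
    refine le_ciInf fun uu => ?_
    obtain ⟨u, ⟨hucd, hu00, -⟩, hnorm, -⟩ := uu
    -- main estimate
    have hud : Differentiable ℝ u := hucd.differentiable one_ne_zero
    have huc : Continuous u := hud.continuous
    have hu'c : Continuous (deriv u) := hucd.continuous_deriv le_rfl
    set f : ℝ → ℝ := fun x => (deriv u x)^2 + (2*α*Real.cos (2*p*x) - p^2) * (u x)^2 with hf
    have hfc : Continuous f := by
      apply Continuous.add (hu'c.pow 2)
      apply Continuous.mul
      · exact ((continuous_const.mul (Real.continuous_cos.comp
          (continuous_const.mul continuous_id))).sub continuous_const)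
      · exact huc.pow 2
    -- pointwise potential identity
    have h12 : 12*s*p^2 = -2*α := by
      rw [hs, hβ]; field_simp; ring
    -- Step 1 : for every 0 < ε < a/2
    have step1 : ∀ ε, 0 < ε → ε < a/2 →
        -(gA p s ε * (u ε)^2) ≤ ∫ x in ε..(a/2), f x := by
      intro ε hε0 hεa
      have hεle : ε ≤ a/2 := le_of_lt hεa
      have hIcc : Set.uIcc ε (a/2) = Set.Icc ε (a/2) := Set.uIcc_of_le hεle
      have hSpos : ∀ x ∈ Set.Icc ε (a/2), 0 < Real.sin (p*x) := by
        intro x hx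
        apply Real.sin_pos_of_pos_of_lt_pi
        · exact mul_pos hp0 (lt_of_lt_of_le hε0 hx.1)
        · have h1 : p * x ≤ p * (a/2) := mul_le_mul_of_nonneg_left hx.2 hp0.le
          rw [hpa2] at h1
          linarith
      have hSne : ∀ x ∈ Set.Icc ε (a/2), Real.sin (p*x) ≠ 0 :=
        fun x hx => (hSpos x hx).ne'
      have hsinc : Continuous (fun x : ℝ => Real.sin (p*x)) :=
        Real.continuous_sin.comp (continuous_const.mul continuous_id)
      have hrestc : Continuous (fun x : ℝ =>
          s * p * (27/10 * Real.sin (2*p*x) - 9/20 * Real.sin (4*p*x) + 3/40 * Real.sin (6*p*x))) := by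
        apply continuous_const.mul
        apply Continuous.add
        apply Continuous.sub
        · exact continuous_const.mul (Real.continuous_sin.comp (continuous_const.mul continuous_id))
        · exact continuous_const.mul (Real.continuous_sin.comp (continuous_const.mul continuous_id))
        · exact continuous_const.mul (Real.continuous_sin.comp (continuous_const.mul continuous_id))
      have hcoskc : Continuous (fun x : ℝ =>
          s * p^2 * (27/5 * Real.cos (2*p*x) - 9/5 * Real.cos (4*p*x) + 9/20 * Real.cos (6*p*x))) := by
        apply continuous_const.mul
        apply Continuous.add
        apply Continuous.sub
        · exact continuous_const.mul (Real.continuous_cos.comp (continuous_const.mul continuous_id))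
        · exact continuous_const.mul (Real.continuous_cos.comp (continuous_const.mul continuous_id))
        · exact continuous_const.mul (Real.continuous_cos.comp (continuous_const.mul continuous_id))
      have hcg : ContinuousOn (fun x => gA p s x) (Set.Icc ε (a/2)) := by
        simp only [gA]
        exact (((continuous_const.mul (Real.continuous_cos.comp
            (continuous_const.mul continuous_id))).continuousOn).div
          hsinc.continuousOn hSne).sub hrestc.continuousOn
      have hcg' : ContinuousOn (fun x => gAd p s x) (Set.Icc ε (a/2)) := by
        simp only [gAd]
        refine ContinuousOn.sub (ContinuousOn.neg ?_) hcoskc.continuousOn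
        exact continuousOn_const.div ((hsinc.pow 2).continuousOn)
          (fun x hx => pow_ne_zero 2 (hSne x hx))
      have hder : ∀ x ∈ Set.uIcc ε (a/2), HasDerivAt (fun y => gA p s y * (u y)^2)
          (gAd p s x * (u x)^2 + gA p s x * (2 * u x * deriv u x)) x := by
        intro x hx
        rw [hIcc] at hx
        have h1 := gA_hasDeriv p s (hSne x hx)
        have h2 : HasDerivAt (fun y => (u y)^2) (2 * u x * deriv u x) x := by
          have : HasDerivAt (fun y => (u y)^2) _ x := (hud x).hasDerivAt.pow 2
          convert this using 1
          ring
        exact h1.mul h2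
      have hInt : IntervalIntegrable (fun x => gAd p s x * (u x)^2 + gA p s x * (2*u x*deriv u x))
          MeasureTheory.volume ε (a/2) := by
        apply ContinuousOn.intervalIntegrable
        rw [hIcc]
        exact (hcg'.mul ((huc.pow 2).continuousOn)).add
          (hcg.mul (((continuous_const.mul huc).mul hu'c).continuousOn))
      have hFTC := intervalIntegral.integral_eq_sub_of_hasDerivAt hder hInt
      have hga2 : gA p s (a/2) = 0 := by
        have h2pa : 2*p*(a/2) = π := by rw [hp]; field_simp; all_goals ring
        have h4pa : 4*p*(a/2) = 2*π := by rw [hp]; field_simp; all_goals ring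
        have h6pa : 6*p*(a/2) = π + 2*π := by rw [hp]; field_simp; all_goals ring
        simp only [gA]
        rw [hpa2, h2pa, h4pa, h6pa, Real.cos_pi_div_two, Real.sin_pi, Real.sin_add,
          Real.sin_pi, Real.sin_two_pi, Real.cos_two_pi]
        norm_num
      rw [hga2] at hFTC
      have hsq : 0 ≤ ∫ x in ε..(a/2), (deriv u x - gA p s x * u x)^2 :=
        intervalIntegral.integral_nonneg hεle (fun x _ => sq_nonneg _)
      have hInt2 : IntervalIntegrable (fun x => (deriv u x - gA p s x * u x)^2)
          MeasureTheory.volume ε (a/2) := by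
        apply ContinuousOn.intervalIntegrable
        rw [hIcc]
        exact ((hu'c.continuousOn.sub (hcg.mul huc.continuousOn)).pow 2)
      have hInt3 : IntervalIntegrable (fun x => (deriv u x)^2 + (gAd p s x + (gA p s x)^2)*(u x)^2)
          MeasureTheory.volume ε (a/2) := by
        apply ContinuousOn.intervalIntegrable
        rw [hIcc]
        exact ((hu'c.pow 2).continuousOn).add ((hcg'.add (hcg.pow 2)).mul (huc.pow 2).continuousOn)
      have hadd : (∫ x in ε..(a/2), (deriv u x - gA p s x * u x)^2)
          + (∫ x in ε..(a/2), (gAd p s x * (u x)^2 + gA p s x * (2*u x*deriv u x)))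
          = ∫ x in ε..(a/2), ((deriv u x)^2 + (gAd p s x + (gA p s x)^2)*(u x)^2) := by
        rw [← intervalIntegral.integral_add hInt2 hInt]
        apply intervalIntegral.integral_congr
        intro x _
        ring
      have hmono : (∫ x in ε..(a/2), ((deriv u x)^2 + (gAd p s x + (gA p s x)^2)*(u x)^2))
          ≤ ∫ x in ε..(a/2), f x := by
        apply intervalIntegral.integral_mono_on hεle hInt3 (hfc.intervalIntegrable _ _)
        intro x hx
        have hric := riccati p s x hs0.le hs1 (hSne x hx)
        have hmul := mul_le_mul_of_nonneg_right hric (sq_nonneg (u x))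
        have e : (-p^2 - 12*s*p^2*Real.cos (2*p*x)) * (u x)^2
            = (2*α*Real.cos (2*p*x) - p^2) * (u x)^2 := by
          linear_combination (-((u x)^2 * Real.cos (2*p*x))) * h12
        rw [e] at hmul
        simp only [hf]
        nlinarith [hmul]
      linarith [hsq, hadd, hFTC, hmono]
    -- Step 2 : take the limit ε → 0⁺
    have hT1 : Filter.Tendsto (fun ε => ∫ x in (0:ℝ)..ε, f x) (nhdsWithin 0 (Set.Ioi 0)) (nhds 0) := by
      have H : HasDerivAt (fun b => ∫ x in (0:ℝ)..b, f x) (f 0) 0 :=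
        intervalIntegral.integral_hasDerivAt_right (hfc.intervalIntegrable 0 0)
          (hfc.stronglyMeasurableAtFilter _ _) hfc.continuousAt
      have := H.continuousAt.tendsto
      rw [intervalIntegral.integral_same] at this
      exact this.mono_left nhdsWithin_le_nhds
    have hT2 : Filter.Tendsto (fun ε => gA p s ε * (u ε)^2)
        (nhdsWithin 0 (Set.Ioi 0)) (nhds 0) := by
      have hA : Filter.Tendsto (fun ε => u ε / ε) (nhdsWithin 0 (Set.Ioi 0))
          (nhds (deriv u 0)) := by
        have hd : HasDerivAt u (deriv u 0) 0 := (hud 0).hasDerivAt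
        rw [hasDerivAt_iff_tendsto_slope] at hd
        have hmono : nhdsWithin (0:ℝ) (Set.Ioi 0) ≤ nhdsWithin 0 {0}ᶜ :=
          nhdsWithin_mono _ (fun x hx => ne_of_gt hx)
        refine Filter.Tendsto.congr' ?_ (hd.mono_left hmono)
        filter_upwards [self_mem_nhdsWithin] with ε hε
        simp [slope_def_field, hu00]
      have hB : Filter.Tendsto (fun ε => Real.sin (p*ε) / ε) (nhdsWithin 0 (Set.Ioi 0))
          (nhds p) := by
        have h1 : HasDerivAt (fun y : ℝ => p*y) p 0 := by
          simpa using (hasDerivAt_id (0:ℝ)).const_mul p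
        have hv : HasDerivAt (fun ε => Real.sin (p*ε)) (Real.cos (p*0) * p) 0 :=
          (Real.hasDerivAt_sin (p*0)).comp 0 h1
        rw [mul_zero, Real.cos_zero, one_mul] at hv
        rw [hasDerivAt_iff_tendsto_slope] at hv
        have hmono : nhdsWithin (0:ℝ) (Set.Ioi 0) ≤ nhdsWithin 0 {0}ᶜ :=
          nhdsWithin_mono _ (fun x hx => ne_of_gt hx)
        refine Filter.Tendsto.congr' ?_ (hv.mono_left hmono)
        filter_upwards [self_mem_nhdsWithin] with ε hε
        simp [slope_def_field]
      have hC : Filter.Tendsto (fun ε => u ε / Real.sin (p*ε)) (nhdsWithin 0 (Set.Ioi 0))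
          (nhds (deriv u 0 / p)) := by
        have h := hA.div hB hp0.ne'
        refine Filter.Tendsto.congr' ?_ h
        filter_upwards [self_mem_nhdsWithin] with ε hε
        have hεne : (ε:ℝ) ≠ 0 := ne_of_gt hε
        by_cases hsε : Real.sin (p*ε) = 0
        · simp [hsε, div_zero]
        · simp only [Pi.div_apply]
          field_simp
      have hTu : Filter.Tendsto u (nhdsWithin 0 (Set.Ioi 0)) (nhds 0) := by
        have := huc.tendsto 0
        rw [hu00] at this
        exact this.mono_left nhdsWithin_le_nhds
      have hTcos : Filter.Tendsto (fun ε => p * Real.cos (p*ε)) (nhdsWithin 0 (Set.Ioi 0))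
          (nhds (p * Real.cos (p*0))) :=
        (((continuous_const.mul (Real.continuous_cos.comp
          (continuous_const.mul continuous_id))).tendsto 0).mono_left nhdsWithin_le_nhds)
      have hrestc : Continuous (fun x : ℝ =>
          s * p * (27/10 * Real.sin (2*p*x) - 9/20 * Real.sin (4*p*x) + 3/40 * Real.sin (6*p*x))) := by
        apply continuous_const.mul
        apply Continuous.add
        apply Continuous.sub
        · exact continuous_const.mul (Real.continuous_sin.comp (continuous_const.mul continuous_id))
        · exact continuous_const.mul (Real.continuous_sin.comp (continuous_const.mul continuous_id))
        · exact continuous_const.mul (Real.continuous_sin.comp (continuous_const.mul continuous_id))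
      have hTrest : Filter.Tendsto (fun ε =>
          s * p * (27/10 * Real.sin (2*p*ε) - 9/20 * Real.sin (4*p*ε) + 3/40 * Real.sin (6*p*ε))
            * (u ε)^2) (nhdsWithin 0 (Set.Ioi 0)) (nhds 0) := by
        have h1 := ((hrestc.tendsto 0).mono_left
          (nhdsWithin_le_nhds : nhdsWithin (0:ℝ) (Set.Ioi 0) ≤ nhds 0))
        have h2 := hTu.pow 2
        have := h1.mul h2
        simpa using this
      have hmain := (hTcos.mul hC).mul hTu
      have hmain2 : Filter.Tendsto (fun ε => p * Real.cos (p*ε) * (u ε / Real.sin (p*ε)) * u ε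
          - s * p * (27/10 * Real.sin (2*p*ε) - 9/20 * Real.sin (4*p*ε) + 3/40 * Real.sin (6*p*ε))
            * (u ε)^2) (nhdsWithin 0 (Set.Ioi 0)) (nhds 0) := by
        have := hmain.sub hTrest
        simpa using this
      refine Filter.Tendsto.congr' ?_ hmain2
      filter_upwards [Ioo_mem_nhdsGT_of_mem (Set.left_mem_Ico.mpr ha2)] with ε hε
      have hsp : 0 < Real.sin (p*ε) := by
        apply Real.sin_pos_of_pos_of_lt_pi
        · exact mul_pos hp0 hε.1
        · have h1 : p * ε < p * (a/2) := by
            apply mul_lt_mul_of_pos_left hε.2 hp0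
          rw [hpa2] at h1
          linarith
      simp only [gA]
      field_simp
    have hbound : 0 ≤ ∫ x in (0:ℝ)..(a/2), f x := by
      have hev : ∀ᶠ ε in nhdsWithin (0:ℝ) (Set.Ioi 0),
          -(gA p s ε * (u ε)^2) + (∫ x in (0:ℝ)..ε, f x) ≤ ∫ x in (0:ℝ)..(a/2), f x := by
        filter_upwards [Ioo_mem_nhdsGT_of_mem (Set.left_mem_Ico.mpr ha2)] with ε hε
        have h1 := step1 ε hε.1 hε.2
        have hsplit : (∫ x in (0:ℝ)..ε, f x) + (∫ x in ε..(a/2), f x)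
            = ∫ x in (0:ℝ)..(a/2), f x :=
          intervalIntegral.integral_add_adjacent_intervals (hfc.intervalIntegrable _ _)
            (hfc.intervalIntegrable _ _)
        linarith
      have hlim : Filter.Tendsto (fun ε => -(gA p s ε * (u ε)^2) + ∫ x in (0:ℝ)..ε, f x)
          (nhdsWithin 0 (Set.Ioi 0)) (nhds 0) := by
        have := hT2.neg.add hT1
        simpa using this
      exact le_of_tendsto hlim hev
    -- Step 3 : conclusion
    have hIray : IntervalIntegrable (fun x => (deriv u x)^2 + 2*α*Real.cos (2*p*x) * (u x)^2)
        MeasureTheory.volume 0 (a/2) := by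
      apply Continuous.intervalIntegrable
      exact (hu'c.pow 2).add ((continuous_const.mul (Real.continuous_cos.comp
        (continuous_const.mul continuous_id))).mul (huc.pow 2))
    have hIu2 : IntervalIntegrable (fun x => p^2 * (u x)^2) MeasureTheory.volume 0 (a/2) :=
      (continuous_const.mul (huc.pow 2)).intervalIntegrable _ _
    have hray : rayQF (fun x => 2 * α * Real.cos (2 * π * x / a)) 0 (a/2) u
        = (∫ x in (0:ℝ)..(a/2), f x) + p^2 := by
      simp only [rayQF]
      have e1 : (∫ x in (0:ℝ)..(a/2), ((deriv u x)^2 + 2*α*Real.cos (2*π*x/a) * (u x)^2))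
          = ∫ x in (0:ℝ)..(a/2), ((deriv u x)^2 + 2*α*Real.cos (2*p*x) * (u x)^2) := by
        apply intervalIntegral.integral_congr
        intro x _
        simp only [harg x]
      rw [e1]
      have e2 : (∫ x in (0:ℝ)..(a/2), f x)
          = (∫ x in (0:ℝ)..(a/2), ((deriv u x)^2 + 2*α*Real.cos (2*p*x) * (u x)^2))
            - ∫ x in (0:ℝ)..(a/2), p^2 * (u x)^2 := by
        rw [← intervalIntegral.integral_sub hIray hIu2]
        apply intervalIntegral.integral_congr
        intro x _
        simp only [hf]
        ring
      have e3 : (∫ x in (0:ℝ)..(a/2), p^2 * (u x)^2) = p^2 := by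
        rw [intervalIntegral.integral_const_mul, hnorm, mul_one]
      rw [e2, e3]
      ring
    rw [hray]
    linarith
  rw [minmaxEV, ciSup_unique]
  exact main _
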